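/- The polynomial Δ = ∏_{1≤i<j≤m} (r_i − r_j)² is μ-symmetric for every partition μ = (μ₁,…,μ_m) of n with m parts; a μ-lift is (1/∏_{i=1}^m μ_i) · S^n_{n−m}, where S^n_{n−m} is the (n−m)-th subdiscriminant in n variables. Equivalently, σ_μ(S^n_{n−m}) = (∏_{i=1}^m μ_i) · Δ. -/

import Mathlib

open MvPolynomial

lemma key_sort {K : Type*} [CommRing K] {n : ℕ} {τ : Type*} [LinearOrder τ] [DecidableEq τ]
    (f : Fin n → τ) (I : Finset (Fin n)) (hf : Set.InjOn f I) :
    ∏ p ∈ I.offDiag.filter (fun p => p.1 < p.2), ((X (f p.1) : MvPolynomial τ K) - X (f p.2)) ^ 2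
    = ∏ p ∈ (I.image f).offDiag.filter (fun p => p.1 < p.2),
        ((X p.1 : MvPolynomial τ K) - X p.2) ^ 2 := by
  refine Finset.prod_nbij
    (fun p => if f p.1 < f p.2 then (f p.1, f p.2) else (f p.2, f p.1)) ?_ ?_ ?_ ?_
  · rintro ⟨a, b⟩ hab
    simp only [Finset.mem_filter, Finset.mem_offDiag] at hab ⊢
    obtain ⟨⟨ha, hb, hne⟩, hlt⟩ := hab
    have hfne : f a ≠ f b := fun h => hne (hf ha hb h)
    rcases lt_or_gt_of_ne hfne with h | h
    · simp only [if_pos h]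
      exact ⟨⟨Finset.mem_image_of_mem f ha, Finset.mem_image_of_mem f hb, hfne⟩, h⟩
    · simp only [if_neg (not_lt_of_gt h)]
      exact ⟨⟨Finset.mem_image_of_mem f hb, Finset.mem_image_of_mem f ha, hfne.symm⟩, h⟩
  · rintro ⟨a, b⟩ hab ⟨c, d⟩ hcd h
    simp only [Finset.coe_filter, Set.mem_setOf_eq, Finset.mem_coe, Finset.mem_offDiag] at hab hcd
    obtain ⟨⟨ha, hb, hne⟩, hlt⟩ := hab
    obtain ⟨⟨hc, hd, hne'⟩, hlt'⟩ := hcd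
    dsimp only at h
    split_ifs at h with h1 h2 h2 <;> simp only [Prod.mk.injEq] at h <;> obtain ⟨e1, e2⟩ := h
    · exact Prod.ext (hf ha hc e1) (hf hb hd e2)
    · exact absurd ((hf ha hd e1) ▸ (hf hb hc e2) ▸ hlt') (asymm hlt)
    · exact absurd ((hf hb hc e1) ▸ (hf ha hd e2) ▸ hlt') (asymm hlt)
    · exact Prod.ext (hf ha hc e2) (hf hb hd e1)
  · rintro ⟨a, b⟩ hab
    simp only [Finset.coe_filter, Set.mem_setOf_eq, Finset.mem_coe, Finset.mem_offDiag,
      Finset.mem_image] at hab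
    obtain ⟨⟨⟨x, hx, hxa⟩, ⟨y, hy, hyb⟩, hne⟩, hlt⟩ := hab
    have hxy : x ≠ y := fun h => hne (hxa ▸ hyb ▸ h ▸ rfl)
    rcases lt_or_gt_of_ne hxy with h | h
    · refine ⟨(x, y), ?_, ?_⟩
      · simp only [Finset.coe_filter, Set.mem_setOf_eq, Finset.mem_coe, Finset.mem_offDiag]
        exact ⟨⟨hx, hy, hxy⟩, h⟩
      · simp only [hxa, hyb, if_pos hlt]
    · refine ⟨(y, x), ?_, ?_⟩
      · simp only [Finset.coe_filter, Set.mem_setOf_eq, Finset.mem_coe, Finset.mem_offDiag]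
        exact ⟨⟨hy, hx, hxy.symm⟩, h⟩
      · simp only [hxa, hyb]
        rw [if_neg (asymm hlt)]
  · rintro ⟨a, b⟩ hab
    dsimp only
    split_ifs with h
    · rfl
    · ring

/-- The `(n-m)`-th subdiscriminant in `n` variables:
`S^n_{n-m} = Σ_{|I| = m} ∏_{i<j ∈ I} (x_i − x_j)²`. -/
noncomputable def subdisc (K : Type*) [Field K] (n m : ℕ) : MvPolynomial (Fin n) K :=
  ∑ I ∈ Finset.powersetCard m (Finset.univ : Finset (Fin n)),
    ∏ p ∈ I.offDiag.filter (fun p => p.1 < p.2), (X p.1 - X p.2) ^ 2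

/-- `Δ = ∏_{i<j} (r_i − r_j)²` is `μ`-symmetric for every partition
`μ = (μ₁,…,μ_m)` of `n`, with `μ`-lift `(1/∏ μ_i) · S^n_{n−m}`; equivalently
`S^n_{n-m}` is symmetric and `σ_μ(S^n_{n−m}) = (∏ μ_i) · Δ`. -/
theorem stmt8 {K : Type*} [Field K] [CharZero K] (n m : ℕ)
    (μ : Fin m → ℕ) (hμ : ∀ j, 1 ≤ μ j) (hsum : ∑ j, μ j = n)
    (asg : Fin n → Fin m) (hmono : Monotone asg)
    (hasg : ∀ j, (Finset.univ.filter (fun i => asg i = j)).card = μ j) :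
    (subdisc K n m).IsSymmetric ∧
    MvPolynomial.aeval (R := K) (fun i => (X (asg i) : MvPolynomial (Fin m) K)) (subdisc K n m)
      = (∏ j, (μ j : K)) •
          ∏ p ∈ (Finset.univ : Finset (Fin m × Fin m)).filter (fun p => p.1 < p.2),
            (X p.1 - X p.2) ^ 2 := by
  classical
  constructor
  · intro e
    rw [subdisc, map_sum]
    have step : ∀ I ∈ Finset.powersetCard m (Finset.univ : Finset (Fin n)),
        rename e (∏ p ∈ I.offDiag.filter (fun p => p.1 < p.2),
          ((X p.1 : MvPolynomial (Fin n) K) - X p.2) ^ 2)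
        = ∏ p ∈ (I.image e).offDiag.filter (fun p => p.1 < p.2),
            ((X p.1 : MvPolynomial (Fin n) K) - X p.2) ^ 2 := by
      intro I _
      rw [map_prod (rename (R := K) e) _ (I.offDiag.filter (fun p => p.1 < p.2))]
      simp only [map_pow, map_sub, rename_X]
      exact key_sort (K := K) (⇑e) I e.injective.injOn
    rw [Finset.sum_congr rfl step]
    refine Finset.sum_nbij' (fun I => I.image e) (fun J => J.image e.symm) ?_ ?_ ?_ ?_ ?_
    · intro I hI
      rw [Finset.mem_powersetCard_univ] at hI ⊢
      rw [Finset.card_image_of_injective _ e.injective, hI]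
    · intro J hJ
      rw [Finset.mem_powersetCard_univ] at hJ ⊢
      rw [Finset.card_image_of_injective _ e.symm.injective, hJ]
    · intro I _
      simp [Finset.image_image, Function.comp_def]
    · intro J _
      simp [Finset.image_image, Function.comp_def]
    · intro I _
      rfl
  · have step : (aeval (R := K) fun i => (X (asg i) : MvPolynomial (Fin m) K)) (subdisc K n m)
        = ∑ I ∈ Finset.powersetCard m (Finset.univ : Finset (Fin n)),
            ∏ p ∈ I.offDiag.filter (fun p => p.1 < p.2),
              ((X (asg p.1) : MvPolynomial (Fin m) K) - X (asg p.2)) ^ 2 := by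
      rw [subdisc, map_sum]
      refine Finset.sum_congr rfl fun I _ => ?_
      rw [map_prod]
      refine Finset.prod_congr rfl fun p _ => ?_
      rw [map_pow, map_sub, aeval_X, aeval_X]
    rw [step, ← Finset.sum_filter_add_sum_filter_not
      (Finset.powersetCard m (Finset.univ : Finset (Fin n)))
      (fun I : Finset (Fin n) => Set.InjOn asg (I : Set (Fin n)))
      (fun I : Finset (Fin n) => ∏ p ∈ I.offDiag.filter (fun p => p.1 < p.2),
        ((X (asg p.1) : MvPolynomial (Fin m) K) - X (asg p.2)) ^ 2)]
    have h2 : ∑ I ∈ (Finset.powersetCard m (Finset.univ : Finset (Fin n))).filter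
        (fun I : Finset (Fin n) => ¬ Set.InjOn asg (I : Set (Fin n))),
        ∏ p ∈ I.offDiag.filter (fun p => p.1 < p.2),
          ((X (asg p.1) : MvPolynomial (Fin m) K) - X (asg p.2)) ^ 2 = 0 := by
      refine Finset.sum_eq_zero fun I hI => ?_
      rw [Finset.mem_filter] at hI
      obtain ⟨-, hI2⟩ := hI
      rw [Set.InjOn] at hI2
      push_neg at hI2
      obtain ⟨a, ha, b, hb, hab, hne⟩ := hI2
      rw [Finset.mem_coe] at ha hb
      rcases lt_or_gt_of_ne hne with h | h
      · refine Finset.prod_eq_zero (i := (a, b)) ?_ ?_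
        · simp [Finset.mem_offDiag, ha, hb, hne, h]
        · simp [hab]
      · refine Finset.prod_eq_zero (i := (b, a)) ?_ ?_
        · simp [Finset.mem_offDiag, ha, hb, hne.symm, h]
        · simp [hab]
    have h1 : ∀ I ∈ (Finset.powersetCard m (Finset.univ : Finset (Fin n))).filter
        (fun I : Finset (Fin n) => Set.InjOn asg (I : Set (Fin n))),
        ∏ p ∈ I.offDiag.filter (fun p => p.1 < p.2),
          ((X (asg p.1) : MvPolynomial (Fin m) K) - X (asg p.2)) ^ 2
        = ∏ p ∈ (Finset.univ : Finset (Fin m × Fin m)).filter (fun p => p.1 < p.2),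
            ((X p.1 : MvPolynomial (Fin m) K) - X p.2) ^ 2 := by
      intro I hI
      rw [Finset.mem_filter, Finset.mem_powersetCard_univ] at hI
      obtain ⟨hcardI, hinj⟩ := hI
      rw [key_sort asg I hinj]
      have himg : I.image asg = Finset.univ := by
        apply Finset.eq_univ_of_card
        rw [Finset.card_image_of_injOn hinj, hcardI, Fintype.card_fin]
      rw [himg]
      congr 1
      ext p
      simp only [Finset.mem_filter, Finset.mem_offDiag, Finset.mem_univ, true_and]
      exact ⟨fun h => h.2, fun h => ⟨ne_of_lt h, h⟩⟩
    rw [Finset.sum_congr rfl h1, h2, add_zero, Finset.sum_const]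
    have hcard : ((Finset.powersetCard m (Finset.univ : Finset (Fin n))).filter
        (fun I : Finset (Fin n) => Set.InjOn asg (I : Set (Fin n)))).card = ∏ j, μ j := by
      have hpi : (Fintype.piFinset (fun j : Fin m =>
          Finset.univ.filter (fun i => asg i = j))).card = ∏ j, μ j := by
        rw [Fintype.card_piFinset]
        exact Finset.prod_congr rfl fun j _ => hasg j
      rw [← hpi]
      refine (Finset.card_nbij (fun g => Finset.image g Finset.univ) ?_ ?_ ?_).symm
      · intro g hg
        rw [Finset.mem_coe, Fintype.mem_piFinset] at hg
        have hgasg : ∀ j, asg (g j) = j := fun j => (Finset.mem_filter.mp (hg j)).2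
        have hginj : Function.Injective g := fun j j' h => by rw [← hgasg j, ← hgasg j', h]
        rw [Finset.mem_coe, Finset.mem_filter, Finset.mem_powersetCard_univ]
        constructor
        · rw [Finset.card_image_of_injective _ hginj, Finset.card_fin]
        · intro a ha b hb h
          rw [Finset.coe_image, Set.mem_image] at ha hb
          obtain ⟨j, -, rfl⟩ := ha
          obtain ⟨j', -, rfl⟩ := hb
          rw [hgasg j, hgasg j'] at h
          rw [h]
      · intro g hg g' hg' h
        rw [Finset.mem_coe, Fintype.mem_piFinset] at hg hg'
        have hgasg : ∀ j, asg (g j) = j := fun j => (Finset.mem_filter.mp (hg j)).2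
        have hg'asg : ∀ j, asg (g' j) = j := fun j => (Finset.mem_filter.mp (hg' j)).2
        funext j
        have h' : Finset.image g Finset.univ = Finset.image g' Finset.univ := h
        have : g j ∈ Finset.image g' Finset.univ := by
          rw [← h']; exact Finset.mem_image_of_mem g (Finset.mem_univ j)
        obtain ⟨j', -, hj'⟩ := Finset.mem_image.mp this
        have : j' = j := by rw [← hg'asg j', hj', hgasg j]
        rw [← hj', this]
      · intro I hI
        rw [Finset.mem_coe, Finset.mem_filter, Finset.mem_powersetCard_univ] at hI
        obtain ⟨hcardI, hinj⟩ := hI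
        have himg : I.image asg = Finset.univ := by
          apply Finset.eq_univ_of_card
          rw [Finset.card_image_of_injOn hinj, hcardI, Fintype.card_fin]
        have hex : ∀ j : Fin m, ∃! a, a ∈ I ∧ asg a = j := by
          intro j
          have : j ∈ I.image asg := himg ▸ Finset.mem_univ j
          obtain ⟨a, ha, haj⟩ := Finset.mem_image.mp this
          exact ⟨a, ⟨ha, haj⟩, fun b ⟨hb, hbj⟩ => hinj hb ha (hbj.trans haj.symm)⟩
        set g := fun j => Finset.choose (fun a => asg a = j) I (hex j) with hg
        have hgI : ∀ j, g j ∈ I := fun j => Finset.choose_mem (fun a => asg a = j) I (hex j)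
        have hgasg : ∀ j, asg (g j) = j := fun j => Finset.choose_property (fun a => asg a = j) I (hex j)
        have hginj : Function.Injective g := fun j j' h => by rw [← hgasg j, ← hgasg j', h]
        refine ⟨g, ?_, ?_⟩
        · rw [Finset.mem_coe, Fintype.mem_piFinset]
          intro j
          rw [Finset.mem_filter]
          exact ⟨Finset.mem_univ _, hgasg j⟩
        · apply Finset.eq_of_subset_of_card_le
          · intro x hx
            obtain ⟨j, -, rfl⟩ := Finset.mem_image.mp hx
            exact hgI j
          · rw [Finset.card_image_of_injective _ hginj, Finset.card_fin, hcardI]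
    rw [hcard, ← Nat.cast_smul_eq_nsmul K, Nat.cast_prod]
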